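/- Let S be a 0-left-cancellative semigroup with zero admitting least common multiples. If φ is an ultra-character of 𝔈(S) that is open (i.e. σ_φ is a nonempty open string), then φ = φ_{σ_φ}; consequently every open ultra-character of 𝔈(S) is of the form φ_σ for some open string σ such that φ_σ is an ultra-character. -/

import Mathlib

namespace ExSt

variable {S : Type*} [SemigroupWithZero S]

/-- `s` divides `t`: `t = s` or `t = s * u` for some `u`. -/
def Divides (s t : S) : Prop := t = s ∨ ∃ u : S, t = s * u

/-- `r` is a least common multiple of `s` and `t`. -/
def IsLCM (s t r : S) : Prop :=
  (Set.range (s * ·) ∩ Set.range (t * ·) = Set.range (r * ·)) ∧ Divides s r ∧ Divides t r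

/-- `S` is 0-left-cancellative. -/
def LeftCancel0 (S : Type*) [SemigroupWithZero S] : Prop :=
  ∀ s t r : S, s * t = s * r → s * t ≠ 0 → t = r

/-- `S` admits least common multiples. -/
def AdmitsLCM (S : Type*) [SemigroupWithZero S] : Prop :=
  ∀ s t : S, ∃ r : S, IsLCM s t r

/-- A string in `S`. -/
def IsString (σ : Set S) : Prop :=
  σ.Nonempty ∧ (0 : S) ∉ σ ∧ (∀ s t : S, Divides s t → t ∈ σ → s ∈ σ) ∧
    ∀ s₁ ∈ σ, ∀ s₂ ∈ σ, ∃ s ∈ σ, Divides s₁ s ∧ Divides s₂ s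

/-- `F_s = {x | s * x ≠ 0}`. -/
def Fset (s : S) : Set S := {x | s * x ≠ 0}

/-- `E_s = sS \ {0}`. -/
def Eset (s : S) : Set S := {y | ∃ x : S, y = s * x ∧ s * x ≠ 0}

/-- `F_w` for `w` in the unitization `t̃S = S ∪ {1}` (modelled as `Option S`, `none = 1`). -/
def FsetW : Option S → Set S
  | none => {x | x ≠ 0}
  | some s => Fset s

/-- `E_w` for `w` in the unitization, with `E_1 = S'`. -/
def EsetW : Option S → Set S
  | none => {x | x ≠ 0}
  | some s => Eset s

/-- `F_Λ = ⋂_{w ∈ Λ} F_w`. -/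
def FsetLam (Λ : Finset (Option S)) : Set S := ⋂ w ∈ Λ, FsetW w

/-- Left multiplication by `u ∈ t̃S` (with `1 · x = x`). -/
def thetaApp : Option S → S → S
  | none, x => x
  | some u, x => u * x

/-- `θ_u(X)` for `u ∈ t̃S`. -/
def thetaImg (u : Option S) (X : Set S) : Set S := thetaApp u '' X

/-- The family `𝔈(S)` of constructible sets. -/
def Econs (S : Type*) [SemigroupWithZero S] : Set (Set S) :=
  {X | ∃ Λ : Finset (Option S), (∃ s : S, some s ∈ Λ) ∧ ∃ u ∈ Λ, X = thetaImg u (FsetLam Λ)}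

/-- `r*σ = {t | t ∥ r·s for some s ∈ σ}`. -/
def rstar (r : S) (σ : Set S) : Set S := {t | ∃ s ∈ σ, Divides t (r * s)}

/-- `r⁻¹*σ = {t | r·t ∈ σ}`. -/
def rinvstar (r : S) (σ : Set S) : Set S := {t | r * t ∈ σ}

/-- `F*_r`: strings `σ` with `r·s ≠ 0` for all `s ∈ σ`. -/
def Fstar (r : S) : Set (Set S) := {σ | IsString σ ∧ ∀ s ∈ σ, r * s ≠ 0}

/-- `E*_r`: strings `σ` with `σ ∩ rS ≠ ∅`. -/
def Estar (r : S) : Set (Set S) := {σ | IsString σ ∧ (σ ∩ Set.range (r * ·)).Nonempty}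

/-- `F*_w` for `w` in the unitization, with `F*_1` the set of all strings. -/
def FstarW : Option S → Set (Set S)
  | none => {σ | IsString σ}
  | some r => Fstar r

/-- `F*_Λ = ⋂_{w ∈ Λ} F*_w`. -/
def FstarLam (Λ : Finset (Option S)) : Set (Set S) := ⋂ w ∈ Λ, FstarW w

/-- The action of `u ∈ t̃S` on strings (with `1*σ = σ`). -/
def thetaStarApp : Option S → Set S → Set S
  | none => id
  | some u => rstar u

/-- `θ*_u(Y)` for `u ∈ t̃S`. -/
def thetaStarImg (u : Option S) (Y : Set (Set S)) : Set (Set S) := thetaStarApp u '' Y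

/-- A character of the semilattice `E` (values `False`/`True` playing the role of `0`/`1`). -/
def IsCharacter (E : Set (Set S)) (φ : Set S → Prop) : Prop :=
  ¬ φ ∅ ∧ (∃ X ∈ E, φ X) ∧ ∀ X ∈ E, ∀ Y ∈ E, (φ (X ∩ Y) ↔ φ X ∧ φ Y)

/-- An ultra-character: a character maximal for the pointwise order on `E`. -/
def IsUltraCharacter (E : Set (Set S)) (φ : Set S → Prop) : Prop :=
  IsCharacter E φ ∧
    ∀ ψ : Set S → Prop, IsCharacter E ψ → (∀ X ∈ E, φ X → ψ X) → ∀ X ∈ E, ψ X → φ X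

/-- The character `φ_σ` associated with a string `σ`. -/
def phiStr (σ : Set S) (X : Set S) : Prop :=
  ∃ Λ : Finset (Option S), (∃ s : S, some s ∈ Λ) ∧ ∃ u ∈ Λ,
    X = thetaImg u (FsetLam Λ) ∧ σ ∈ thetaStarImg u (FstarLam Λ)

/-- The set `σ_φ = {s | φ(E_s) = 1}` associated with a character `φ`. -/
def sigmaOf (φ : Set S → Prop) : Set S := {s | φ (Eset s)}

/-- The interior of a string. -/
def strInterior (σ : Set S) : Set S := {s | ∃ x : S, s * x ∈ σ}

section Auxiliary

attribute [local instance] Classical.decEq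

lemma div_refl (s : S) : Divides s s := Or.inl rfl

lemma div_mul (s u : S) : Divides s (s * u) := Or.inr ⟨u, rfl⟩

lemma div_trans {s t r : S} (h1 : Divides s t) (h2 : Divides t r) : Divides s r := by
  rcases h1 with rfl | ⟨u, rfl⟩
  · exact h2
  · rcases h2 with rfl | ⟨v, rfl⟩
    · exact Or.inr ⟨u, rfl⟩
    · exact Or.inr ⟨u * v, by rw [mul_assoc]⟩

lemma div_mul_left (a : S) {s t : S} (h : Divides s t) : Divides (a * s) (a * t) := by
  rcases h with rfl | ⟨u, rfl⟩
  · exact Or.inl rfl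
  · exact Or.inr ⟨u, by rw [mul_assoc]⟩

lemma div_cancel (hlc : LeftCancel0 S) {a s t : S} (h : Divides (a * t) (a * s))
    (hs : a * s ≠ 0) : Divides t s := by
  rcases h with he | ⟨v, he⟩
  · exact Or.inl (hlc a s t he hs)
  · rw [mul_assoc] at he
    exact Or.inr ⟨v, hlc a s (t * v) he hs⟩

lemma mem_fsetLam {Λ : Finset (Option S)} {x : S} :
    x ∈ FsetLam Λ ↔ ∀ w ∈ Λ, x ∈ FsetW w := by simp [FsetLam]

lemma mem_fstarLam {Λ : Finset (Option S)} {τ : Set S} :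
    τ ∈ FstarLam Λ ↔ ∀ w ∈ Λ, τ ∈ FstarW w := by simp [FstarLam]

lemma mem_fsetW_iff {w : Option S} {x : S} : x ∈ FsetW w ↔ thetaApp w x ≠ 0 := by
  cases w <;> simp [FsetW, Fset, thetaApp]

/-- Multiplication on the unitization. -/
def mulO : Option S → Option S → Option S
  | none, o => o
  | some a, none => some a
  | some a, some c => some (a * c)

lemma thetaApp_mulO (u o : Option S) (z : S) :
    thetaApp (mulO u o) z = thetaApp u (thetaApp o z) := by
  cases u <;> cases o <;> simp [mulO, thetaApp, mul_assoc]

lemma thetaApp_cancel (hlc : LeftCancel0 S) {u : Option S} {y y' : S}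
    (h : thetaApp u y = thetaApp u y') (h0 : thetaApp u y ≠ 0) : y = y' := by
  cases u with
  | none => exact h
  | some a => exact hlc a y y' h h0

/-- Shifting a `Finset` of conditions by an element of the unitization. -/
noncomputable def shiftF (o : Option S) (Λ : Finset (Option S)) : Finset (Option S) :=
  Λ.image (fun w => mulO w o)

lemma mem_fsetW_mulO {w o : Option S} {z : S} :
    z ∈ FsetW (mulO w o) ↔ thetaApp o z ∈ FsetW w := by
  cases w <;> cases o <;> simp [mulO, FsetW, Fset, thetaApp, mul_assoc]

lemma mem_fsetLam_shiftF {o : Option S} {Λ : Finset (Option S)} {z : S} :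
    z ∈ FsetLam (shiftF o Λ) ↔ thetaApp o z ∈ FsetLam Λ := by
  rw [mem_fsetLam, mem_fsetLam]
  constructor
  · intro h w hw
    exact mem_fsetW_mulO.mp (h _ (Finset.mem_image_of_mem _ hw))
  · intro h w' hw'
    rcases Finset.mem_image.mp hw' with ⟨w, hw, rfl⟩
    exact mem_fsetW_mulO.mpr (h w hw)

lemma shiftF_some_mem {Λ : Finset (Option S)} {s : S} (h : some s ∈ Λ) (o : Option S) :
    ∃ s' : S, some s' ∈ shiftF o Λ := by
  cases o with
  | none => exact ⟨s, Finset.mem_image_of_mem _ h⟩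
  | some c => exact ⟨s * c, Finset.mem_image_of_mem _ h⟩

lemma div_to_mulO {a r : S} (h : Divides a r) : ∃ o : Option S, some r = mulO (some a) o := by
  rcases h with rfl | ⟨u, rfl⟩
  · exact ⟨none, rfl⟩
  · exact ⟨some u, rfl⟩

lemma exists_lcm_data (hlcm : AdmitsLCM S) (u v : Option S) :
    ∃ r a' b' : Option S, r = mulO u a' ∧ r = mulO v b' ∧
      Set.range (thetaApp u) ∩ Set.range (thetaApp v) ⊆ Set.range (thetaApp r) := by
  cases u with
  | none =>
    exact ⟨v, v, none, rfl, by cases v <;> rfl, fun x hx => hx.2⟩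
  | some a =>
    cases v with
    | none => exact ⟨some a, none, some a, rfl, rfl, fun x hx => hx.1⟩
    | some b =>
      obtain ⟨r, hr, hra, hrb⟩ := hlcm a b
      obtain ⟨a', ha'⟩ := div_to_mulO hra
      obtain ⟨b', hb'⟩ := div_to_mulO hrb
      refine ⟨some r, a', b', ha', hb', ?_⟩
      have e1 : Set.range (thetaApp (some a)) = Set.range (a * ·) := by ext x; simp [thetaApp]
      have e2 : Set.range (thetaApp (some b)) = Set.range (b * ·) := by ext x; simp [thetaApp]
      have e3 : Set.range (thetaApp (some r)) = Set.range (r * ·) := by ext x; simp [thetaApp]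
      rw [e1, e2, e3, hr]

lemma econs_inter (hlc : LeftCancel0 S) (hlcm : AdmitsLCM S) {X Y : Set S}
    (hX : X ∈ Econs S) (hY : Y ∈ Econs S) : X ∩ Y ∈ Econs S := by
  obtain ⟨Λ, ⟨s₀, hs₀⟩, u, huΛ, rfl⟩ := hX
  obtain ⟨M, ⟨t₀, ht₀⟩, v, hvM, rfl⟩ := hY
  obtain ⟨r, a', b', hua, hvb, hsub⟩ := exists_lcm_data hlcm u v
  obtain ⟨s₁, hs₁⟩ := shiftF_some_mem hs₀ a'
  refine ⟨insert r (shiftF a' Λ ∪ shiftF b' M),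
    ⟨s₁, Finset.mem_insert_of_mem (Finset.mem_union_left _ hs₁)⟩,
    r, Finset.mem_insert_self _ _, ?_⟩
  ext x
  simp only [Set.mem_inter_iff, thetaImg, Set.mem_image]
  constructor
  · rintro ⟨⟨y, hy, rfl⟩, ⟨w, hw, hvw⟩⟩
    have hx0 : thetaApp u y ≠ 0 := mem_fsetW_iff.mp (mem_fsetLam.mp hy u huΛ)
    obtain ⟨z, hz⟩ : thetaApp u y ∈ Set.range (thetaApp r) := hsub ⟨⟨y, rfl⟩, ⟨w, hvw⟩⟩
    have key : thetaApp u y = thetaApp u (thetaApp a' z) := by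
      rw [← hz, hua, thetaApp_mulO]
    have hy' : y = thetaApp a' z := thetaApp_cancel hlc key hx0
    have key2 : thetaApp v w = thetaApp v (thetaApp b' z) := by
      rw [hvw, ← hz, hvb, thetaApp_mulO]
    have hw' : w = thetaApp b' z := thetaApp_cancel hlc key2 (by rw [hvw]; exact hx0)
    refine ⟨z, ?_, hz⟩
    rw [mem_fsetLam]
    intro w' hw'mem
    rcases Finset.mem_insert.mp hw'mem with rfl | hw''
    · exact mem_fsetW_iff.mpr (by rw [hz]; exact hx0)
    rcases Finset.mem_union.mp hw'' with h1 | h1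
    · exact mem_fsetLam.mp (mem_fsetLam_shiftF.mpr (hy' ▸ hy)) w' h1
    · exact mem_fsetLam.mp (mem_fsetLam_shiftF.mpr (hw' ▸ hw)) w' h1
  · rintro ⟨z, hz, rfl⟩
    have hza : thetaApp a' z ∈ FsetLam Λ := by
      refine mem_fsetLam_shiftF.mp (mem_fsetLam.mpr fun w hw => ?_)
      exact mem_fsetLam.mp hz _ (Finset.mem_insert_of_mem (Finset.mem_union_left _ hw))
    have hzb : thetaApp b' z ∈ FsetLam M := by
      refine mem_fsetLam_shiftF.mp (mem_fsetLam.mpr fun w hw => ?_)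
      exact mem_fsetLam.mp hz _ (Finset.mem_insert_of_mem (Finset.mem_union_right _ hw))
    exact ⟨⟨thetaApp a' z, hza, by rw [hua, thetaApp_mulO]⟩,
      ⟨thetaApp b' z, hzb, by rw [hvb, thetaApp_mulO]⟩⟩

/-- The canonical condition equivalent (for open strings) to `σ ∈ θ*_u(F*_Λ)`. -/
def CanonP (σ : Set S) (u : Option S) (Λ : Finset (Option S)) : Prop :=
  (∀ a : S, u = some a → a ∈ σ) ∧
  ∀ t : S, thetaApp u t ∈ σ → ∀ r : S, some r ∈ Λ → r * t ≠ 0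

lemma canonP_mem (hlc : LeftCancel0 S) {σ : Set S} (hstr : IsString σ)
    (hopen : σ = strInterior σ) {u : Option S} {Λ : Finset (Option S)}
    (hP : CanonP σ u Λ) : σ ∈ thetaStarImg u (FstarLam Λ) := by
  obtain ⟨hne, h0, hdown, hdir⟩ := hstr
  cases u with
  | none =>
    refine ⟨σ, ?_, rfl⟩
    rw [mem_fstarLam]
    intro w hw
    cases w with
    | none => exact ⟨hne, h0, hdown, hdir⟩
    | some r => exact ⟨⟨hne, h0, hdown, hdir⟩, fun s hs => hP.2 s hs r hw⟩
  | some a =>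
    have haσ : a ∈ σ := hP.1 a rfl
    have hτstr : IsString (rinvstar a σ) := by
      refine ⟨?_, ?_, ?_, ?_⟩
      · have : a ∈ strInterior σ := hopen ▸ haσ
        obtain ⟨x, hx⟩ := this
        exact ⟨x, hx⟩
      · intro h
        exact h0 (by simpa [rinvstar, mul_zero] using h)
      · intro s t hst ht
        exact hdown (a * s) (a * t) (div_mul_left a hst) ht
      · intro t₁ ht₁ t₂ ht₂
        obtain ⟨c, hc, h1, h2⟩ := hdir (a * t₁) ht₁ (a * t₂) ht₂
        rcases h1 with rfl | ⟨e, rfl⟩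
        · have hne0 : a * t₁ ≠ 0 := fun hz => h0 (hz ▸ hc)
          exact ⟨t₁, hc, div_refl t₁, div_cancel hlc h2 hne0⟩
        · rw [mul_assoc] at hc h2
          have hne0 : a * (t₁ * e) ≠ 0 := fun hz => h0 (hz ▸ hc)
          exact ⟨t₁ * e, hc, div_mul t₁ e, div_cancel hlc h2 hne0⟩
    refine ⟨rinvstar a σ, ?_, ?_⟩
    · rw [mem_fstarLam]
      intro w hw
      cases w with
      | none => exact hτstr
      | some r => exact ⟨hτstr, fun t ht => hP.2 t ht r hw⟩
    · show rstar a (rinvstar a σ) = σ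
      ext x
      constructor
      · rintro ⟨s, hs, hdiv⟩
        exact hdown x (a * s) hdiv hs
      · intro hx
        obtain ⟨c, hc, hxc, hac⟩ := hdir x hx a haσ
        rcases hac with rfl | ⟨e, rfl⟩
        · have : c ∈ strInterior σ := hopen ▸ hc
          obtain ⟨y, hy⟩ := this
          exact ⟨y, hy, div_trans hxc (div_mul c y)⟩
        · exact ⟨e, hc, hxc⟩

lemma mem_canonP (hlc : LeftCancel0 S) {σ : Set S} {u : Option S} {Λ : Finset (Option S)}
    (hu : u ∈ Λ) (h : σ ∈ thetaStarImg u (FstarLam Λ)) : CanonP σ u Λ := by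
  obtain ⟨τ, hτ, rfl⟩ := h
  cases u with
  | none =>
    refine ⟨fun _ h => (by cases h), fun t ht r hr => ?_⟩
    exact (mem_fstarLam.mp hτ (some r) hr).2 t ht
  | some a =>
    obtain ⟨⟨hτne, hτ0, hτdown, hτdir⟩, hτa0⟩ := mem_fstarLam.mp hτ (some a) hu
    constructor
    · rintro a' ha'
      injection ha' with ha'
      subst ha'
      obtain ⟨t₀, ht₀⟩ := hτne
      exact ⟨t₀, ht₀, Or.inr ⟨t₀, rfl⟩⟩
    · intro t ht r hr
      obtain ⟨s, hs, hdiv⟩ := ht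
      have htτ : t ∈ τ := hτdown t s (div_cancel hlc hdiv (hτa0 s hs)) hs
      exact (mem_fstarLam.mp hτ (some r) hr).2 t htτ

lemma eset_mem_econs (s : S) : Eset s ∈ Econs S := by
  refine ⟨{some s}, ⟨s, Finset.mem_singleton_self (some s)⟩, some s, Finset.mem_singleton_self (some s), ?_⟩
  ext x
  constructor
  · rintro ⟨y, rfl, hy⟩
    refine ⟨y, mem_fsetLam.mpr ?_, rfl⟩
    intro w hw
    rw [Finset.mem_singleton] at hw
    subst hw
    exact hy
  · rintro ⟨y, hy, rfl⟩
    exact ⟨y, rfl, mem_fsetW_iff.mp (mem_fsetLam.mp hy (some s) (Finset.mem_singleton_self (some s)))⟩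

lemma char_nonempty {φ : Set S → Prop} (hc : IsCharacter (Econs S) φ) {Z : Set S}
    (hZ : φ Z) : Z.Nonempty := by
  rcases Z.eq_empty_or_nonempty with rfl | h
  · exact absurd hZ hc.1
  · exact h

lemma phi_canonP {φ : Set S → Prop} (hlc : LeftCancel0 S) (hc : IsCharacter (Econs S) φ)
    {u : Option S} {Λ : Finset (Option S)} (hsΛ : ∃ s : S, some s ∈ Λ) (hu : u ∈ Λ)
    (hφX : φ (thetaImg u (FsetLam Λ))) : CanonP (sigmaOf φ) u Λ := by
  have hXE : thetaImg u (FsetLam Λ) ∈ Econs S := ⟨Λ, hsΛ, u, hu, rfl⟩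
  constructor
  · rintro a rfl
    have hsub : thetaImg (some a) (FsetLam Λ) ⊆ Eset a := by
      rintro x ⟨y, hy, rfl⟩
      exact ⟨y, rfl, mem_fsetW_iff.mp (mem_fsetLam.mp hy (some a) hu)⟩
    have hiff := hc.2.2 _ hXE _ (eset_mem_econs a)
    rw [Set.inter_eq_self_of_subset_left hsub] at hiff
    exact (hiff.mp hφX).2
  · intro t ht r hr
    have hiff := hc.2.2 _ hXE _ (eset_mem_econs (thetaApp u t))
    have hint : φ (thetaImg u (FsetLam Λ) ∩ Eset (thetaApp u t)) := hiff.mpr ⟨hφX, ht⟩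
    obtain ⟨x, ⟨y, hy, hxy⟩, ⟨w, hxw, hw0⟩⟩ := char_nonempty hc hint
    have key : thetaApp u y = thetaApp u (t * w) := by
      rw [hxy, hxw]
      cases u <;> simp [thetaApp, mul_assoc]
    have hy0 : thetaApp u y ≠ 0 := mem_fsetW_iff.mp (mem_fsetLam.mp hy u hu)
    have hytw : y = t * w := thetaApp_cancel hlc key hy0
    have hry : r * y ≠ 0 := mem_fsetW_iff.mp (mem_fsetLam.mp hy (some r) hr)
    intro h
    apply hry
    rw [hytw, ← mul_assoc, h, zero_mul]

lemma phi_to_phiStr {φ : Set S → Prop} (hlc : LeftCancel0 S)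
    (hc : IsCharacter (Econs S) φ) (hstr : IsString (sigmaOf φ))
    (hopen : sigmaOf φ = strInterior (sigmaOf φ)) :
    ∀ X ∈ Econs S, φ X → phiStr (sigmaOf φ) X := by
  rintro X ⟨Λ, hsΛ, u, hu, rfl⟩ hφX
  exact ⟨Λ, hsΛ, u, hu, rfl, canonP_mem hlc hstr hopen (phi_canonP hlc hc hsΛ hu hφX)⟩

/-- Intersection of a list of sets. -/
def interList : List (Set S) → Set S
  | [] => Set.univ
  | Y :: l => Y ∩ interList l

lemma mem_interList {l : List (Set S)} {x : S} : x ∈ interList l ↔ ∀ Y ∈ l, x ∈ Y := by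
  induction l with
  | nil => simp [interList]
  | cons Y l ih => simp [interList, ih]

lemma ultra_of_meets {φ : Set S → Prop} (hφ : IsUltraCharacter (Econs S) φ)
    {X : Set S} (hX : X ∈ Econs S)
    (H : ∀ l : List (Set S), (∀ Y ∈ l, Y ∈ Econs S ∧ φ Y) → (X ∩ interList l).Nonempty) :
    φ X := by
  set ψ : Set S → Prop := fun Z =>
    ∃ l : List (Set S), (∀ Y ∈ l, Y ∈ Econs S ∧ φ Y) ∧ X ∩ interList l ⊆ Z with hψdef
  have hψX : ψ X := ⟨[], by simp, by simp [interList]⟩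
  have hψchar : IsCharacter (Econs S) ψ := by
    refine ⟨?_, ⟨X, hX, hψX⟩, ?_⟩
    · rintro ⟨l, hl, hsub⟩
      obtain ⟨x, hx⟩ := H l hl
      exact Set.notMem_empty x (hsub hx)
    · intro Z₁ h₁ Z₂ h₂
      constructor
      · rintro ⟨l, hl, hsub⟩
        exact ⟨⟨l, hl, fun x hx => (hsub hx).1⟩, ⟨l, hl, fun x hx => (hsub hx).2⟩⟩
      · rintro ⟨⟨l₁, hl₁, hs₁⟩, ⟨l₂, hl₂, hs₂⟩⟩
        refine ⟨l₁ ++ l₂, ?_, ?_⟩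
        · intro Y hY
          rcases List.mem_append.mp hY with h | h
          exacts [hl₁ Y h, hl₂ Y h]
        · intro x hx
          have h1 : x ∈ interList l₁ := mem_interList.mpr fun Y hY =>
            mem_interList.mp hx.2 Y (List.mem_append.mpr (Or.inl hY))
          have h2 : x ∈ interList l₂ := mem_interList.mpr fun Y hY =>
            mem_interList.mp hx.2 Y (List.mem_append.mpr (Or.inr hY))
          exact ⟨hs₁ ⟨hx.1, h1⟩, hs₂ ⟨hx.1, h2⟩⟩
  have hle : ∀ Z ∈ Econs S, φ Z → ψ Z := by
    intro Z hZ hφZ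
    exact ⟨[Z], by simp [hZ, hφZ], fun x hx => mem_interList.mp hx.2 Z (by simp)⟩
  exact hφ.2 ψ hψchar hle X hX hψX

/-- Compatibility of the head of a presentation with an element of the string. -/
def HeadOK (u : Option S) (c : S) : Prop := ∀ a : S, u = some a → Divides a c

lemma headOK_mono {u : Option S} {c c' : S} (h : HeadOK u c) (hcc : Divides c c') :
    HeadOK u c' := fun a ha => div_trans (h a ha) hcc

lemma mem_of_canonP {σ : Set S} (h0 : (0 : S) ∉ σ) {v : Option S} {M : Finset (Option S)}
    (hP : CanonP σ v M) {c d : S} (hcd : c * d ∈ σ) (hv : HeadOK v c) :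
    c * d ∈ thetaImg v (FsetLam M) := by
  cases v with
  | none =>
    refine ⟨c * d, ?_, rfl⟩
    rw [mem_fsetLam]
    intro w hw
    cases w with
    | none => exact fun hz => h0 (hz ▸ hcd)
    | some r => exact hP.2 (c * d) hcd r hw
  | some b =>
    rcases hv b rfl with hc | ⟨e, rfl⟩
    · subst hc
      refine ⟨d, ?_, rfl⟩
      rw [mem_fsetLam]
      intro w hw
      cases w with
      | none =>
        intro hz
        apply h0
        rw [hz, mul_zero] at hcd
        exact hcd
      | some r => exact hP.2 d hcd r hw
    · rw [mul_assoc] at hcd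
      refine ⟨e * d, ?_, (mul_assoc b e d).symm⟩
      rw [mem_fsetLam]
      intro w hw
      cases w with
      | none =>
        intro hz
        apply h0
        rw [hz, mul_zero] at hcd
        exact hcd
      | some r => exact hP.2 (e * d) hcd r hw

lemma exists_dominator {σ : Set S}
    (hdir : ∀ s₁ ∈ σ, ∀ s₂ ∈ σ, ∃ s ∈ σ, Divides s₁ s ∧ Divides s₂ s)
    (l : List (Set S))
    (hl : ∀ Y ∈ l, ∃ v M, v ∈ M ∧ Y = thetaImg v (FsetLam M) ∧ CanonP σ v M)
    {c₀ : S} (hc₀ : c₀ ∈ σ) :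
    ∃ c ∈ σ, Divides c₀ c ∧
      ∀ Y ∈ l, ∃ v M, v ∈ M ∧ Y = thetaImg v (FsetLam M) ∧ CanonP σ v M ∧ HeadOK v c := by
  induction l with
  | nil => exact ⟨c₀, hc₀, div_refl c₀, by simp⟩
  | cons Y l ih =>
    obtain ⟨c, hc, hc₀c, hrest⟩ := ih fun Z hZ => hl Z (List.mem_cons_of_mem _ hZ)
    obtain ⟨v, M, hvM, hYeq, hPv⟩ := hl Y List.mem_cons_self
    cases v with
    | none =>
      refine ⟨c, hc, hc₀c, ?_⟩
      intro Z hZ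
      rcases List.mem_cons.mp hZ with rfl | hZ
      · exact ⟨none, M, hvM, hYeq, hPv, fun _ h => by cases h⟩
      · exact hrest Z hZ
    | some b =>
      have hb : b ∈ σ := hPv.1 b rfl
      obtain ⟨c', hc', hcc', hbc'⟩ := hdir c hc b hb
      refine ⟨c', hc', div_trans hc₀c hcc', ?_⟩
      intro Z hZ
      rcases List.mem_cons.mp hZ with rfl | hZ
      · refine ⟨some b, M, hvM, hYeq, hPv, ?_⟩
        rintro a h
        injection h with h
        exact h ▸ hbc'
      · obtain ⟨v', M', h1, h2, h3, h4⟩ := hrest Z hZ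
        exact ⟨v', M', h1, h2, h3, headOK_mono h4 hcc'⟩

lemma phiStr_to_phi {φ : Set S → Prop} (hlc : LeftCancel0 S)
    (hφ : IsUltraCharacter (Econs S) φ) (hstr : IsString (sigmaOf φ))
    (hopen : sigmaOf φ = strInterior (sigmaOf φ)) {X : Set S}
    (hps : phiStr (sigmaOf φ) X) : φ X := by
  obtain ⟨Λ, hsΛ, u, hu, rfl, hσmem⟩ := hps
  have hPX : CanonP (sigmaOf φ) u Λ := mem_canonP hlc hu hσmem
  obtain ⟨hne, h0, hdown, hdir⟩ := hstr
  apply ultra_of_meets hφ ⟨Λ, hsΛ, u, hu, rfl⟩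
  intro l hl
  have hl' : ∀ Y ∈ l, ∃ v M, v ∈ M ∧ Y = thetaImg v (FsetLam M) ∧ CanonP (sigmaOf φ) v M := by
    intro Y hY
    obtain ⟨hYE, hφY⟩ := hl Y hY
    obtain ⟨M, hsM, v, hv, rfl⟩ := hYE
    exact ⟨v, M, hv, rfl, phi_canonP hlc hφ.1 hsM hv hφY⟩
  obtain ⟨c₀, hc₀, hc₀u⟩ : ∃ c₀ ∈ sigmaOf φ, HeadOK u c₀ := by
    cases u with
    | none =>
      obtain ⟨c₀, hc₀⟩ := hne
      exact ⟨c₀, hc₀, fun _ h => by cases h⟩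
    | some a =>
      refine ⟨a, hPX.1 a rfl, ?_⟩
      rintro a' h
      injection h with h
      exact h ▸ div_refl a
  obtain ⟨c, hc, hc₀c, hall⟩ := exists_dominator hdir l hl' hc₀
  have hcu : HeadOK u c := headOK_mono hc₀u hc₀c
  have hcint : c ∈ strInterior (sigmaOf φ) := hopen ▸ hc
  obtain ⟨d, hd⟩ := hcint
  refine ⟨c * d, ?_, ?_⟩
  · exact mem_of_canonP h0 hPX hd hcu
  · rw [mem_interList]
    intro Y hY
    obtain ⟨v, M, hvM, rfl, hPv, hv⟩ := hall Y hY
    exact mem_of_canonP h0 hPv hd hv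

end Auxiliary

/-- Every open ultra-character `φ` of `𝔈(S)` equals `φ_{σ_φ}`; consequently every open
ultra-character is of the form `φ_σ` for some open string `σ` with `φ_σ` ultra. -/
theorem open_ultra_character_is_phiStr (hlc : LeftCancel0 S) (hlcm : AdmitsLCM S)
    (φ : Set S → Prop) (hφ : IsUltraCharacter (Econs S) φ)
    (hstr : IsString (sigmaOf φ)) (hopen : sigmaOf φ = strInterior (sigmaOf φ)) :
    (∀ X ∈ Econs S, (φ X ↔ phiStr (sigmaOf φ) X)) ∧
    ∃ σ : Set S, IsString σ ∧ σ = strInterior σ ∧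
      IsUltraCharacter (Econs S) (phiStr σ) ∧ ∀ X ∈ Econs S, (φ X ↔ phiStr σ X) := by
  have main : ∀ X ∈ Econs S, (φ X ↔ phiStr (sigmaOf φ) X) := by
    intro X hX
    exact ⟨phi_to_phiStr hlc hφ.1 hstr hopen X hX,
      fun h => phiStr_to_phi hlc hφ hstr hopen h⟩
  refine ⟨main, sigmaOf φ, hstr, hopen, ⟨⟨?_, ?_, ?_⟩, ?_⟩, main⟩
  · intro h
    exact hφ.1.1 (phiStr_to_phi hlc hφ hstr hopen h)
  · obtain ⟨X₀, hX₀, hφX₀⟩ := hφ.1.2.1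
    exact ⟨X₀, hX₀, (main X₀ hX₀).mp hφX₀⟩
  · intro X hX Y hY
    have hXY : X ∩ Y ∈ Econs S := econs_inter hlc hlcm hX hY
    rw [← main _ hXY, ← main _ hX, ← main _ hY]
    exact hφ.1.2.2 X hX Y hY
  · intro ψ hψ hle Z hZ hψZ
    have hle' : ∀ X ∈ Econs S, φ X → ψ X := fun X hX hφX => hle X hX ((main X hX).mp hφX)
    exact (main Z hZ).mp (hφ.2 ψ hψ hle' Z hZ hψZ)

end ExSt
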